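/- For integers m ≥ n ≥ 3 and 3 ≤ k < ⌈(2mn+3)/3⌉, the generalized k-edge-connectivity of the torus satisfies 2 ≤ λ_k(C_m □ C_n) ≤ 3. -/

import Mathlib

open SimpleGraph

/-- `T` is an `S`-Steiner tree in `G`: a subgraph of `G` that is a tree containing `S`. -/
def IsSteinerTree {V : Type*} (G : SimpleGraph V) (S : Set V) (T : G.Subgraph) : Prop :=
  S ⊆ T.verts ∧ T.coe.IsTree

/-- There exist `n` pairwise edge-disjoint `S`-Steiner trees in `G`. -/
def HasEDSteinerTrees {V : Type*} (G : SimpleGraph V) (S : Set V) (n : ℕ) : Prop :=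
  ∃ f : Fin n → G.Subgraph, (∀ i, IsSteinerTree G S (f i)) ∧
    ∀ i j, i ≠ j → Disjoint (f i).edgeSet (f j).edgeSet

/-- Generalized local edge-connectivity: max number of pairwise edge-disjoint S-Steiner trees. -/
noncomputable def steinerLambda {V : Type*} (G : SimpleGraph V) (S : Set V) : ℕ :=
  sSup {n | HasEDSteinerTrees G S n}

/-- Generalized k-edge-connectivity. -/
noncomputable def genLambda {V : Type*} [Fintype V] (G : SimpleGraph V) (k : ℕ) : ℕ :=
  sInf {m | ∃ S : Finset V, S.card = k ∧ steinerLambda G ↑S = m}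

/-- Ordinary edge-connectivity ("cut" version). -/
noncomputable def edgeConn {V : Type*} [Fintype V] (G : SimpleGraph V) : ℕ :=
  sInf {n | ∃ M : Finset (Sym2 V), M.card = n ∧ ↑M ⊆ G.edgeSet ∧
    ¬ (G.deleteEdges ↑M).Connected}

/-- Minimum degree. -/
noncomputable def minDeg {V : Type*} [Fintype V] (G : SimpleGraph V) : ℕ :=
  @SimpleGraph.minDegree V G _ (Classical.decRel _)

/-- There exist `n` pairwise edge-disjoint spanning trees of `G`. -/
def HasEDSpanningTrees {V : Type*} (G : SimpleGraph V) (n : ℕ) : Prop :=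
  ∃ f : Fin n → G.Subgraph, (∀ i, (f i).IsSpanning ∧ (f i).coe.IsTree) ∧
    ∀ i j, i ≠ j → Disjoint (f i).edgeSet (f j).edgeSet

/-- Maximum number of pairwise edge-disjoint spanning trees. -/
noncomputable def spanningTreePacking {V : Type*} (G : SimpleGraph V) : ℕ :=
  sSup {n | HasEDSpanningTrees G n}

section Ptree

variable {V : Type*} {G : SimpleGraph V} {root : V} {p : V → V}

/-- The subgraph generated by a parent function. -/
def ptreeSub (G : SimpleGraph V) (root : V) (p : V → V)
    (hp : ∀ v, v ≠ root → G.Adj v (p v)) : G.Subgraph where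
  verts := Set.univ
  Adj v w := (v ≠ root ∧ w = p v) ∨ (w ≠ root ∧ v = p w)
  adj_sub := by
    rintro v w (⟨h1, rfl⟩ | ⟨h1, rfl⟩)
    · exact hp v h1
    · exact (hp w h1).symm
  edge_vert := fun _ => trivial
  symm := ⟨fun v w h => by tauto⟩

variable {rank : V → ℕ} {hp : ∀ v, v ≠ root → G.Adj v (p v)}

section anc
variable (hroot : p root = root) (hrank : ∀ v, v ≠ root → rank (p v) < rank v)
include hroot hrank

private lemma rank_p_le (v : V) : rank (p v) ≤ rank v := by
  by_cases h : v = root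
  · subst h; rw [hroot]
  · exact (hrank v h).le

private lemma rank_iterate_le (t : ℕ) (w : V) : rank (p^[t] w) ≤ rank w := by
  induction t with
  | zero => simp
  | succ t ih =>
    rw [Function.iterate_succ_apply']
    exact (rank_p_le hroot hrank _).trans ih

private lemma not_anc_parent {v : V} (hv : v ≠ root) : ¬ ∃ t, p^[t] (p v) = v := by
  rintro ⟨t, ht⟩
  have h1 := rank_iterate_le hroot hrank t (p v)
  rw [ht] at h1
  exact absurd (h1.trans_lt (hrank v hv)) (lt_irrefl _)
end anc

private lemma anc_step {v w : V} (hw : w ≠ v) :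
    (∃ t, p^[t] w = v) ↔ (∃ t, p^[t] (p w) = v) := by
  constructor
  · rintro ⟨t, ht⟩
    cases t with
    | zero => exact absurd ht hw
    | succ t => exact ⟨t, by rwa [Function.iterate_succ_apply] at ht⟩
  · rintro ⟨t, ht⟩
    exact ⟨t + 1, by rwa [Function.iterate_succ_apply]⟩

theorem ptreeSub_isTree [Nonempty V]
    (hroot : p root = root) (hrank : ∀ v, v ≠ root → rank (p v) < rank v) :
    (ptreeSub G root p hp).coe.IsTree := by
  set T := ptreeSub G root p hp with hT
  have hadjT : ∀ v w : V, T.Adj v w ↔ ((v ≠ root ∧ w = p v) ∨ (w ≠ root ∧ v = p w)) := by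
    intro v w; rfl
  have hverts : ∀ v : V, v ∈ T.verts := fun v => trivial
  -- connectivity
  have hreach : ∀ (N : ℕ) (v : V), rank v ≤ N →
      T.coe.Reachable ⟨v, hverts v⟩ ⟨root, hverts root⟩ := by
    intro N
    induction N with
    | zero =>
      intro v hv
      by_cases h : v = root
      · subst h; exact Reachable.refl _
      · exact absurd (Nat.le_zero.mp hv ▸ hrank v h) (by omega)
    | succ N ih =>
      intro v hv
      by_cases h : v = root
      · subst h; exact Reachable.refl _
      · have hadj : T.coe.Adj ⟨v, hverts v⟩ ⟨p v, hverts _⟩ := Or.inl ⟨h, rfl⟩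
        exact hadj.reachable.trans (ih _ (by have := hrank v h; omega))
  have hconn : T.coe.Connected := by
    have hne : Nonempty T.verts := ⟨⟨Classical.arbitrary V, trivial⟩⟩
    exact ⟨fun a b => (hreach _ a.1 le_rfl).trans (hreach _ b.1 le_rfl).symm⟩
  constructor
  · exact hconn
  · -- acyclicity: every edge is a bridge
    rw [isAcyclic_iff_forall_adj_isBridge]
    -- key: removing the edge (v, p v) disconnects v from p v
    have key : ∀ v : V, v ≠ root →
        ¬ (T.coe \ fromEdgeSet {s((⟨v, hverts v⟩ : T.verts), ⟨p v, hverts _⟩)}).Reachable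
          ⟨v, hverts v⟩ ⟨p v, hverts _⟩ := by
      intro v hv hR
      set e : Sym2 T.verts := s((⟨v, hverts v⟩ : T.verts), ⟨p v, hverts _⟩) with he
      -- invariant: ancestry of v
      have inv : ∀ {x y : T.verts}, (T.coe \ fromEdgeSet {e}).Adj x y →
          ((∃ t, p^[t] x.1 = v) ↔ (∃ t, p^[t] y.1 = v)) := by
        rintro x y ⟨hxy0, hnotmem⟩
        rw [fromEdgeSet_adj] at hnotmem
        push_neg at hnotmem
        have hxyne : x ≠ y := fun hh => (T.adj_sub hxy0).ne (congrArg Subtype.val hh)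
        have hne' : s(x, y) ≠ e := fun hcon => hxyne (hnotmem (by simp [hcon]))
        rcases hxy0 with ⟨hxr, hpy⟩ | ⟨hyr, hpx⟩
        · -- y.1 = p x.1
          by_cases hxv : x.1 = v
          · exfalso
            apply hne'
            have hx : x = (⟨v, hverts v⟩ : T.verts) := Subtype.ext hxv
            have hy : y = (⟨p v, hverts _⟩ : T.verts) := Subtype.ext (by rw [hpy, hxv])
            rw [hx, hy]
          · rw [show y = (⟨p x.1, hverts _⟩ : T.verts) from Subtype.ext hpy]
            exact anc_step hxv
        · by_cases hyv : y.1 = v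
          · exfalso
            apply hne'
            have hy : y = (⟨v, hverts v⟩ : T.verts) := Subtype.ext hyv
            have hx : x = (⟨p v, hverts _⟩ : T.verts) := Subtype.ext (by rw [hpx, hyv])
            rw [hx, hy, Sym2.eq_swap]
          · rw [show x = (⟨p y.1, hverts _⟩ : T.verts) from Subtype.ext hpx]
            exact (anc_step hyv).symm
      have walkinv : ∀ {x y : T.verts}, (T.coe \ fromEdgeSet {e}).Reachable x y →
          ((∃ t, p^[t] x.1 = v) ↔ (∃ t, p^[t] y.1 = v)) := by
        intro x y hxy
        obtain ⟨w⟩ := hxy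
        induction w with
        | nil => rfl
        | cons h q ih => exact (inv h).trans ih
      have h1 : ∃ t, p^[t] v = v := ⟨0, rfl⟩
      exact not_anc_parent hroot hrank hv ((walkinv hR).mp h1)
    intro a b hab
    rw [isBridge_iff]
    rcases hab with ⟨har, hbp⟩ | ⟨hbr, hap⟩
    · have hb : b = (⟨p a.1, hverts _⟩ : T.verts) := Subtype.ext hbp
      rw [hb]
      exact key a.1 har
    · have ha : a = (⟨p b.1, hverts _⟩ : T.verts) := Subtype.ext hap
      rw [ha]
      intro hR
      have h2 : s((⟨p b.1, hverts _⟩ : T.verts), b) = s(b, ⟨p b.1, hverts _⟩) := Sym2.eq_swap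
      have hR' := hR.symm
      rw [h2] at hR'
      exact key b.1 hbr hR'

end Ptree

section CycHelp

lemma cyc_adj {N : ℕ} {x y : Fin (N+3)} (h : y.val = x.val + 1 ∨ (x.val = 0 ∧ y.val = N+2)) :
    (cycleGraph (N+3)).Adj x y := by
  have hx := x.isLt; have hy := y.isLt
  show (cycleGraph (N+1+2)).Adj x y
  rw [cycleGraph_adj]
  rcases h with h | ⟨h1, h2⟩
  · right
    rw [Fin.ext_iff, Fin.sub_def, Fin.val_one]
    show (N + 3 - ↑x + ↑y) % (N + 3) = 1
    have h5 : (N + 3 - x.val + y.val) = (N+3) + 1 := by omega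
    rw [h5, Nat.add_mod_left]
    exact Nat.mod_eq_of_lt (by omega)
  · left
    rw [Fin.ext_iff, Fin.sub_def, Fin.val_one]
    show (N + 3 - ↑y + ↑x) % (N + 3) = 1
    have h5 : (N + 3 - y.val + x.val) = 1 := by omega
    rw [h5]
    exact Nat.mod_eq_of_lt (by omega)

lemma cyc_pred {N : ℕ} {x : Fin (N+3)} (h : x.val ≠ 0) {h2 : x.val - 1 < N+3} :
    (cycleGraph (N+3)).Adj x ⟨x.val - 1, h2⟩ := by
  refine (cyc_adj (Or.inl ?_)).symm
  show x.val = x.val - 1 + 1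
  omega

lemma cyc_succ {N : ℕ} {x : Fin (N+3)} {v : ℕ} (hv : v = x.val + 1) {h2 : v < N+3} :
    (cycleGraph (N+3)).Adj x ⟨v, h2⟩ :=
  cyc_adj (Or.inl hv)

lemma cyc_wrap {N : ℕ} {x : Fin (N+3)} (h : x.val = 0) {h2 : N+2 < N+3} :
    (cycleGraph (N+3)).Adj x ⟨N+2, h2⟩ :=
  cyc_adj (Or.inr ⟨h, rfl⟩)

lemma cyc_nbr {N : ℕ} {c d : Fin (N+3)} (h : (cycleGraph (N+3)).Adj c d) :
    d = c + 1 ∨ d = c - 1 := by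
  have h' : (cycleGraph (N+1+2)).Adj c d := h
  rw [cycleGraph_adj] at h'
  rcases h' with h' | h'
  · right; rw [← h']; exact (sub_sub_cancel c d).symm
  · left; rw [← h']; exact (add_sub_cancel c d).symm

end CycHelp

section Torus

variable (a b : ℕ)

abbrev TorusV := Fin (a+3) × Fin (b+3)

abbrev torus : SimpleGraph (TorusV a b) := cycleGraph (a+3) □ cycleGraph (b+3)

def root1 : TorusV a b := (0, 0)
def root2 : TorusV a b := (0, ⟨b+2, by omega⟩)

def pOne : TorusV a b → TorusV a b := fun z =>
  if z.2.val = 0 then (⟨z.1.val - 1, by have := z.1.isLt; omega⟩, z.2)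
  else if z.1.val = 0 then
    (if z.2.val = 1 then (z.1, ⟨0, by omega⟩) else (⟨a + 2, by omega⟩, z.2))
  else (z.1, ⟨z.2.val - 1, by have := z.2.isLt; omega⟩)

def rankOne : TorusV a b → ℕ := fun z =>
  if z.2.val = 0 then z.1.val
  else z.2.val * (a+5) + (if z.1.val = 0 then a+3 else z.1.val)

def pTwo : TorusV a b → TorusV a b := fun z =>
  if z.2.val = 0 then (z.1, ⟨b+2, by omega⟩)
  else if z.1.val = 0 then
    (if h : z.2.val = b+2 then z else (z.1, ⟨z.2.val + 1, by have := z.2.isLt; omega⟩))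
  else (⟨z.1.val - 1, by have := z.1.isLt; omega⟩, z.2)

def rankTwo : TorusV a b → ℕ := fun z =>
  if z.2.val = 0 then (b+3) * (a+5) + z.1.val
  else (b+2 - z.2.val) * (a+5) + z.1.val

variable {a b}

lemma ne_root1_iff {z : TorusV a b} : z ≠ root1 a b ↔ ¬(z.1.val = 0 ∧ z.2.val = 0) := by
  rw [root1, Ne, Prod.ext_iff, Fin.ext_iff, Fin.ext_iff]
  simp

lemma ne_root2_iff {z : TorusV a b} : z ≠ root2 a b ↔ ¬(z.1.val = 0 ∧ z.2.val = b+2) := by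
  rw [root2, Ne, Prod.ext_iff, Fin.ext_iff, Fin.ext_iff]
  simp

lemma pOne_root : pOne a b (root1 a b) = root1 a b := by
  simp [pOne, root1, Prod.ext_iff, Fin.ext_iff]

lemma pTwo_root : pTwo a b (root2 a b) = root2 a b := by
  simp [pTwo, root2, Prod.ext_iff, Fin.ext_iff]

lemma pOne_adj : ∀ z, z ≠ root1 a b → (torus a b).Adj z (pOne a b z) := by
  rintro ⟨i, j⟩ hz
  rw [ne_root1_iff] at hz
  dsimp only at hz
  simp only [pOne]
  try dsimp only
  rw [boxProd_adj]
  split_ifs with h1 h2 h3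
  · -- j = 0, so i ≠ 0 : horizontal step down
    exact Or.inl ⟨cyc_pred (show i.val ≠ 0 by omega), rfl⟩
  · -- i = 0, j = 1 : vertical step to 0
    exact Or.inr ⟨(cyc_adj (Or.inl (show j.val = (0:ℕ) + 1 by omega))).symm, rfl⟩
  · -- i = 0, j ≥ 2 : horizontal wrap
    exact Or.inl ⟨cyc_wrap h2, rfl⟩
  · -- i ≥ 1, j ≥ 1 : vertical step down
    exact Or.inr ⟨cyc_pred h1, rfl⟩

lemma pTwo_adj : ∀ z, z ≠ root2 a b → (torus a b).Adj z (pTwo a b z) := by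
  rintro ⟨i, j⟩ hz
  rw [ne_root2_iff] at hz
  dsimp only at hz
  simp only [pTwo]
  try dsimp only
  rw [boxProd_adj]
  split_ifs with h1 h2 h3
  · -- j = 0 : vertical wrap
    exact Or.inr ⟨cyc_wrap h1, rfl⟩
  · -- i = 0, j = b+2 : excluded
    exact absurd ⟨h2, h3⟩ hz
  · -- i = 0, j ≤ b+1 : vertical step up
    exact Or.inr ⟨cyc_succ rfl, rfl⟩
  · -- i ≥ 1 : horizontal step down
    exact Or.inl ⟨cyc_pred h2, rfl⟩

lemma rankOne_lt : ∀ z, z ≠ root1 a b → rankOne a b (pOne a b z) < rankOne a b z := by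
  rintro ⟨i, j⟩ hz
  rw [ne_root1_iff] at hz
  dsimp only at hz
  have hi := i.isLt; have hj := j.isLt
  simp only [pOne]
  try dsimp only
  split_ifs with h1 h2 h3
  · -- j = 0, i ≥ 1 : (i-1, j)
    simp only [rankOne, h1, if_pos]
    try dsimp only
    simp [h1]
    all_goals simp only [Fin.lt_def, Fin.val_zero]
    all_goals omega
  · -- i = 0, j = 1 : parent (0,0), rank 0
    simp only [rankOne]
    try dsimp only
    simp [h1, h2, h3]
    all_goals omega
  · -- i = 0, j ≥ 2 : (a+2, j)
    simp only [rankOne]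
    try dsimp only
    simp [h1, h2, show ¬(a+2 = 0) by omega]
    all_goals omega
  · -- i ≥ 1, j ≥ 1 : (i, j-1)
    simp only [rankOne]
    try dsimp only
    by_cases hj1 : j.val = 1
    · simp [h1, h2, hj1]
      all_goals have hle : 1*(a+5) ≤ j.val * (a+5) := Nat.mul_le_mul_right _ (by omega)
      all_goals rw [one_mul] at hle
      all_goals omega
    · have hj2 : ¬ (j.val - 1 = 0) := by omega
      simp [h1, h2, hj2]
      all_goals simp only [Fin.lt_def, Fin.val_zero]
      all_goals obtain ⟨jj, hjj⟩ : ∃ jj, j.val = jj + 1 := ⟨j.val - 1, by omega⟩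
      all_goals rw [hjj]
      all_goals simp
      all_goals rw [Nat.succ_mul]
      all_goals omega

lemma rankTwo_lt : ∀ z, z ≠ root2 a b → rankTwo a b (pTwo a b z) < rankTwo a b z := by
  rintro ⟨i, j⟩ hz
  rw [ne_root2_iff] at hz
  dsimp only at hz
  have hi := i.isLt; have hj := j.isLt
  simp only [pTwo]
  try dsimp only
  split_ifs with h1 h2 h3
  · -- j = 0 → (i, b+2)
    simp only [rankTwo]
    try dsimp only
    simp [h1, show ¬(b+2 = 0) by omega]
    all_goals have hpos : (0:ℕ) < (b+3)*(a+5) := by positivity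
    all_goals omega
  · -- i = 0, j = b+2 : excluded
    exact absurd ⟨h2, h3⟩ hz
  · -- i = 0, j < b+2 → (0, j+1)
    simp only [rankTwo]
    try dsimp only
    simp [h1, show ¬(j.val+1 = 0) by omega]
    all_goals omega
  · -- i ≥ 1 → (i-1, j)
    simp only [rankTwo]
    try dsimp only
    simp [h1]
    all_goals simp only [Fin.lt_def, Fin.val_zero]
    all_goals omega

lemma pDisj2 (z : TorusV a b) (h1 : z ≠ root1 a b) (h2 : z ≠ root2 a b) :
    pOne a b z ≠ pTwo a b z := by
  obtain ⟨i, j⟩ := z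
  rw [ne_root1_iff] at h1; rw [ne_root2_iff] at h2
  dsimp only at h1 h2
  have hi := i.isLt; have hj := j.isLt
  simp only [pOne, pTwo]
  try dsimp only
  split_ifs <;> simp only [ne_eq, Prod.ext_iff, Fin.ext_iff, Fin.val_mk] <;> omega

lemma pDisj1 (z : TorusV a b) (h1 : z ≠ root1 a b) (h2 : pOne a b z ≠ root2 a b) :
    pTwo a b (pOne a b z) ≠ z := by
  obtain ⟨i, j⟩ := z
  rw [ne_root1_iff] at h1; rw [ne_root2_iff] at h2
  have hi := i.isLt; have hj := j.isLt
  simp only [pOne, pTwo] at h2 ⊢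
  try dsimp only at h2 ⊢
  split_ifs at h2 ⊢ <;> simp_all only [ne_eq, Prod.ext_iff, Fin.ext_iff, Fin.val_mk] <;> omega

end Torus

section Count

open SimpleGraph Walk

variable {V : Type*} {G : SimpleGraph V}

lemma exists_adj_steiner {T : G.Subgraph} (hc : T.coe.Connected) {u w : V}
    (hu : u ∈ T.verts) (hw : w ∈ T.verts) (hne : u ≠ w) : ∃ x, T.Adj u x := by
  obtain ⟨p⟩ := hc ⟨u, hu⟩ ⟨w, hw⟩
  have hnn : ¬ p.Nil := Walk.not_nil_of_ne (fun h => hne (congrArg Subtype.val h))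
  obtain ⟨x, hadj, q, rfl⟩ := Walk.not_nil_iff.mp hnn
  exact ⟨x.val, hadj⟩

lemma two_adj_steiner {T : G.Subgraph} (hc : T.coe.Connected) {u v w : V}
    (hu : u ∈ T.verts) (hv : v ∈ T.verts) (hw : w ∈ T.verts)
    (huv : u ≠ v) (huw : u ≠ w) (hvw : v ≠ w) :
    ∃ x y, T.Adj u x ∧ T.Adj v y ∧ s(u, x) ≠ s(v, y) := by
  classical
  obtain ⟨p0⟩ := hc ⟨u, hu⟩ ⟨w, hw⟩
  obtain ⟨p, hp⟩ : ∃ p : T.coe.Walk ⟨u, hu⟩ ⟨w, hw⟩, p.IsPath := ⟨p0.toPath, p0.toPath.2⟩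
  have hnn : ¬ p.Nil := Walk.not_nil_of_ne (fun h => huw (congrArg Subtype.val h))
  obtain ⟨x, hadj, q, rfl⟩ := Walk.not_nil_iff.mp hnn
  obtain ⟨r0⟩ := hc ⟨v, hv⟩ ⟨w, hw⟩
  have hnn2 : ¬ r0.Nil := Walk.not_nil_of_ne (fun h => hvw (congrArg Subtype.val h))
  obtain ⟨y, hadj2, r', hr⟩ := Walk.not_nil_iff.mp hnn2
  by_cases hcase : s(u, x.val) = s(v, y.val)
  · -- then x.val = v; use second edge of p
    rw [Sym2.eq_iff] at hcase
    have hxv : x.val = v := by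
      rcases hcase with ⟨h1, h2⟩ | ⟨h1, h2⟩
      · exact absurd h1 huv
      · exact h2
    have hnnq : ¬ q.Nil := Walk.not_nil_of_ne
      (fun h => hvw (by rw [← hxv]; exact congrArg Subtype.val h))
    obtain ⟨z, hadj3, q', rfl⟩ := Walk.not_nil_iff.mp hnnq
    refine ⟨x.val, z.val, hadj, ?_, ?_⟩
    · rw [← hxv]; exact hadj3
    · -- s(u, x.val) ≠ s(x.val, z.val) since z ≠ u
      have hzu : z.val ≠ u := by
        intro hzu
        rw [Walk.cons_isPath_iff] at hp
        have hz : (⟨u, hu⟩ : T.verts) ∈ (Walk.cons hadj3 q').support := by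
          rw [show (⟨u, hu⟩ : T.verts) = z from Subtype.ext hzu.symm]
          rw [Walk.support_cons]
          exact List.mem_cons_of_mem _ q'.start_mem_support
        exact hp.2 hz
      intro hcon
      rw [Sym2.eq_iff] at hcon
      rcases hcon with ⟨h1, h2⟩ | ⟨h1, h2⟩
      · exact G.ne_of_adj (T.adj_sub hadj3) h2
      · exact hzu h1.symm
  · exact ⟨x.val, y.val, hadj, hadj2, hcase⟩

lemma steiner_le_bound {S : Set V} {t : ℕ}
    (h : HasEDSteinerTrees G S t) {u w : V} (hu : u ∈ S) (hw : w ∈ S) (hne : u ≠ w)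
    (Nu : Finset V) (hNu : ∀ x, G.Adj u x → x ∈ Nu) : t ≤ Nu.card := by
  classical
  obtain ⟨f, hf, hdisj⟩ := h
  have hx : ∀ i : Fin t, ∃ x, (f i).Adj u x := fun i =>
    exists_adj_steiner ((hf i).2.isConnected) ((hf i).1 hu) ((hf i).1 hw) hne
  choose x hx using hx
  have hcard : (Finset.univ : Finset (Fin t)).card ≤ Nu.card := by
    apply Finset.card_le_card_of_injOn (fun i => x i)
      (fun i _ => hNu _ ((f i).adj_sub (hx i)))
    intro i _ j _ hij
    have hij' : x i = x j := hij
    by_contra hne2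
    have h1 : s(u, x i) ∈ (f i).edgeSet := SimpleGraph.Subgraph.mem_edgeSet.mpr (hx i)
    have h2 : s(u, x i) ∈ (f j).edgeSet := by
      have := SimpleGraph.Subgraph.mem_edgeSet.mpr (hx j)
      rwa [← hij'] at this
    exact Set.disjoint_left.mp (hdisj i j hne2) h1 h2
  simpa using hcard

lemma not_four_steiner {S : Set V} {u v w : V}
    (huS : u ∈ S) (hvS : v ∈ S) (hwS : w ∈ S)
    (huv : u ≠ v) (huw : u ≠ w) (hvw : v ≠ w)
    (N : Finset (Sym2 V)) (hN : N.card ≤ 7)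
    (hNu : ∀ x, G.Adj u x → s(u, x) ∈ N) (hNv : ∀ y, G.Adj v y → s(v, y) ∈ N) :
    ¬ HasEDSteinerTrees G S 4 := by
  classical
  rintro ⟨f, hf, hdisj⟩
  have hxy : ∀ i : Fin 4, ∃ x y, (f i).Adj u x ∧ (f i).Adj v y ∧ s(u, x) ≠ s(v, y) :=
    fun i => two_adj_steiner ((hf i).2.isConnected)
      ((hf i).1 huS) ((hf i).1 hvS) ((hf i).1 hwS) huv huw hvw
  choose x y hx hy hxyne using hxy
  set P : Fin 4 → Finset (Sym2 V) := fun i => {s(u, x i), s(v, y i)} with hP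
  have hPedge : ∀ i e, e ∈ P i → e ∈ (f i).edgeSet := by
    intro i e he
    rcases Finset.mem_insert.mp he with rfl | he
    · exact SimpleGraph.Subgraph.mem_edgeSet.mpr (hx i)
    · rw [Finset.mem_singleton] at he
      subst he
      exact SimpleGraph.Subgraph.mem_edgeSet.mpr (hy i)
  have hPcard : ∀ i, (P i).card = 2 := fun i => Finset.card_pair (hxyne i)
  have hPsub : ∀ i, P i ⊆ N := by
    intro i e he
    rcases Finset.mem_insert.mp he with rfl | he
    · exact hNu _ ((f i).adj_sub (hx i))
    · rw [Finset.mem_singleton] at he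
      subst he
      exact hNv _ ((f i).adj_sub (hy i))
  have hPdisj : ∀ i ∈ (Finset.univ : Finset (Fin 4)), ∀ j ∈ Finset.univ, i ≠ j →
      Disjoint (P i) (P j) := by
    intro i _ j _ hij
    rw [Finset.disjoint_left]
    intro e hei hej
    exact Set.disjoint_left.mp (hdisj i j hij) (hPedge i e hei) (hPedge j e hej)
  have h8 : (Finset.univ.biUnion P).card = 8 := by
    rw [Finset.card_biUnion hPdisj]
    simp [hPcard]
  have hle : (Finset.univ.biUnion P).card ≤ N.card :=
    Finset.card_le_card (Finset.biUnion_subset.mpr fun i _ => hPsub i)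
  omega

end Count

section Final

open SimpleGraph

variable {a b : ℕ}

/-- neighbor candidates of a torus vertex -/
def nbr (z : TorusV a b) : Finset (TorusV a b) :=
  {(z.1 + 1, z.2), (z.1 - 1, z.2), (z.1, z.2 + 1), (z.1, z.2 - 1)}

lemma nbr_card (z : TorusV a b) : (nbr z).card ≤ 4 := by
  apply le_trans (Finset.card_insert_le _ _)
  apply Nat.succ_le_succ
  apply le_trans (Finset.card_insert_le _ _)
  apply Nat.succ_le_succ
  apply le_trans (Finset.card_insert_le _ _)
  apply Nat.succ_le_succ
  simp

lemma adj_mem_nbr {z x : TorusV a b} (h : (torus a b).Adj z x) : x ∈ nbr z := by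
  rw [boxProd_adj] at h
  have hx : x = (x.1, x.2) := rfl
  rcases h with ⟨h1, h2⟩ | ⟨h1, h2⟩
  · rcases cyc_nbr h1 with h3 | h3 <;>
      · rw [nbr, hx, h3, ← h2]
        simp
  · rcases cyc_nbr h1 with h3 | h3 <;>
      · rw [nbr, hx, h3, ← h2]
        simp

lemma torus_adj_uv : (torus a b).Adj (0, 0) ((0 : Fin (a+3)), (1 : Fin (b+3))) := by
  rw [boxProd_adj]
  right
  exact ⟨cyc_adj (Or.inl (by simp)), rfl⟩

/-- The 7-element edge set around u = (0,0) and v = (0,1). -/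
noncomputable def N7 (a b : ℕ) : Finset (Sym2 (TorusV a b)) := by
  classical
  exact ((nbr ((0 : Fin (a+3)), (0 : Fin (b+3)))).image (fun t => s(((0 : Fin (a+3)), (0 : Fin (b+3))), t))) ∪
    ((nbr ((0 : Fin (a+3)), (1 : Fin (b+3)))).image (fun t => s(((0 : Fin (a+3)), (1 : Fin (b+3))), t)))

lemma N7_mem_u {x : TorusV a b} (h : (torus a b).Adj (0, 0) x) :
    s(((0 : Fin (a+3)), (0 : Fin (b+3))), x) ∈ N7 a b := by
  classical
  rw [N7]
  apply Finset.mem_union_left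
  exact Finset.mem_image.mpr ⟨x, adj_mem_nbr h, rfl⟩

lemma N7_mem_v {x : TorusV a b} (h : (torus a b).Adj (0, 1) x) :
    s(((0 : Fin (a+3)), (1 : Fin (b+3))), x) ∈ N7 a b := by
  classical
  rw [N7]
  apply Finset.mem_union_right
  exact Finset.mem_image.mpr ⟨x, adj_mem_nbr h, rfl⟩

lemma N7_card : (N7 a b).card ≤ 7 := by
  classical
  set u : TorusV a b := (0, 0)
  set v : TorusV a b := (0, 1)
  set A := (nbr u).image (fun t => s(u, t)) with hA
  set B := (nbr v).image (fun t => s(v, t)) with hB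
  have hAcard : A.card ≤ 4 := le_trans (Finset.card_image_le) (nbr_card u)
  have hBcard : B.card ≤ 4 := le_trans (Finset.card_image_le) (nbr_card v)
  have hmemA : s(u, v) ∈ A := by
    apply Finset.mem_image.mpr
    refine ⟨(u.1, u.2 + 1), by simp [nbr], ?_⟩
    have : (u.1, u.2 + 1) = v := by
      rw [Prod.ext_iff]
      exact ⟨rfl, zero_add 1⟩
    rw [this]
  have hmemB : s(u, v) ∈ B := by
    apply Finset.mem_image.mpr
    refine ⟨(v.1, v.2 - 1), by simp [nbr], ?_⟩
    have : (v.1, v.2 - 1) = u := by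
      rw [Prod.ext_iff]
      exact ⟨rfl, sub_self 1⟩
    rw [this, Sym2.eq_swap]
  have hinter : 1 ≤ (A ∩ B).card := by
    rw [Nat.succ_le_iff, Finset.card_pos]
    exact ⟨s(u, v), Finset.mem_inter.mpr ⟨hmemA, hmemB⟩⟩
  have := Finset.card_union_add_card_inter A B
  have hN : N7 a b = A ∪ B := rfl
  rw [hN]
  omega

lemma uv_ne : ((0 : Fin (a+3)), (0 : Fin (b+3))) ≠ ((0 : Fin (a+3)), (1 : Fin (b+3))) := by
  simp [Prod.ext_iff, Fin.ext_iff]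

/-- restriction of Steiner tree families -/
lemma hasED_mono {V : Type*} {G : SimpleGraph V} {S : Set V} {s t : ℕ} (hst : s ≤ t)
    (h : HasEDSteinerTrees G S t) : HasEDSteinerTrees G S s := by
  obtain ⟨f, hf, hdisj⟩ := h
  exact ⟨f ∘ Fin.castLE hst, fun i => hf _,
    fun i j hij => hdisj _ _ (fun hc => hij (Fin.castLE_injective hst hc))⟩

lemma hasED_zero {V : Type*} {G : SimpleGraph V} {S : Set V} : HasEDSteinerTrees G S 0 :=
  ⟨fun i => i.elim0, fun i => i.elim0, fun i => i.elim0⟩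

/-- the two edge-disjoint spanning trees give two Steiner trees -/
lemma hasED_two (S : Set (TorusV a b)) : HasEDSteinerTrees (torus a b) S 2 := by
  have hNE : Nonempty (TorusV a b) := ⟨(0, 0)⟩
  set T1 : (torus a b).Subgraph := ptreeSub (torus a b) (root1 a b) (pOne a b) pOne_adj with hT1
  set T2 : (torus a b).Subgraph := ptreeSub (torus a b) (root2 a b) (pTwo a b) pTwo_adj with hT2
  have ht1 : T1.coe.IsTree := ptreeSub_isTree pOne_root rankOne_lt
  have ht2 : T2.coe.IsTree := ptreeSub_isTree pTwo_root rankTwo_lt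
  have hdisjT : Disjoint T1.edgeSet T2.edgeSet := by
    rw [Set.disjoint_left]
    intro e he1 he2
    induction e using Sym2.ind with
    | _ xx yy =>
      rw [SimpleGraph.Subgraph.mem_edgeSet] at he1 he2
      rcases he1 with ⟨h1, rfl⟩ | ⟨h1, rfl⟩ <;> rcases he2 with ⟨h2, he⟩ | ⟨h2, he⟩
      · exact pDisj2 xx h1 h2 he
      · exact pDisj1 xx h1 h2 he.symm
      · exact pDisj1 yy h1 h2 he.symm
      · exact pDisj2 yy h1 h2 he
  refine ⟨![T1, T2], ?_, ?_⟩
  · intro i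
    fin_cases i
    · exact ⟨fun x _ => Set.mem_univ x, ht1⟩
    · exact ⟨fun x _ => Set.mem_univ x, ht2⟩
  · intro i j hij
    fin_cases i <;> fin_cases j <;> simp_all
    all_goals first
      | exact hdisjT
      | exact hdisjT.symm

theorem stmt13' (m n k : ℕ) (hn : 3 ≤ n) (hmn : n ≤ m)
    (hk3 : 3 ≤ k) (hk : k < (2 * m * n + 5) / 3) :
    2 ≤ genLambda (cycleGraph m □ cycleGraph n) k ∧
      genLambda (cycleGraph m □ cycleGraph n) k ≤ 3 := by
  classical
  have hm : 3 ≤ m := le_trans hn hmn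
  obtain ⟨A, rfl⟩ : ∃ A, m = A + 3 := ⟨m - 3, by omega⟩
  obtain ⟨B, rfl⟩ : ∃ B, n = B + 3 := ⟨n - 3, by omega⟩
  set G : SimpleGraph (TorusV A B) := torus A B with hG
  -- k ≤ (A+3)*(B+3)
  have hcardV : Fintype.card (TorusV A B) = (A+3) * (B+3) := by simp
  have hk2 : k ≤ (A+3) * (B+3) := by
    have h2 : (3:ℕ) * 3 ≤ (A+3) * (B+3) := Nat.mul_le_mul (by omega) (by omega)
    have h3 : 2 * (A+3) * (B+3) = 2 * ((A+3) * (B+3)) := by ring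
    rw [h3] at hk
    set P := (A+3) * (B+3) with hP
    omega
  -- boundedness of the Steiner number sets
  have hbdd : ∀ S : Finset (TorusV A B), 3 ≤ S.card →
      BddAbove {n | HasEDSteinerTrees G ↑S n} := by
    intro S hS
    have h1S : 1 < S.card := by omega
    obtain ⟨u, hu, w, hw, huw⟩ := Finset.one_lt_card.mp h1S
    refine ⟨4, fun t ht => ?_⟩
    exact le_trans (steiner_le_bound ht (Finset.mem_coe.mpr hu) (Finset.mem_coe.mpr hw)
      huw (nbr u) (fun x hx => adj_mem_nbr hx)) (nbr_card u)
  constructor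
  · -- lower bound
    rw [genLambda]
    apply le_csInf
    · obtain ⟨S, -, hS⟩ := Finset.exists_subset_card_eq
        (s := (Finset.univ : Finset (TorusV A B))) (n := k) (by rw [Finset.card_univ, hcardV]; exact hk2)
      exact ⟨_, S, hS, rfl⟩
    · rintro x ⟨S, hScard, rfl⟩
      have hmem : HasEDSteinerTrees G (↑S) 2 := hasED_two (a := A) (b := B) ↑S
      exact le_csSup (hbdd S (by omega)) hmem
  · -- upper bound
    set u : TorusV A B := (0, 0) with hu
    set v : TorusV A B := (0, 1) with hv
    have huv : u ≠ v := uv_ne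
    obtain ⟨S, hSsub, -, hScard⟩ := Finset.exists_subsuperset_card_eq
      (Finset.subset_univ ({u, v} : Finset (TorusV A B))) (n := k)
      (by rw [Finset.card_pair huv]; omega)
      (by rw [Finset.card_univ, hcardV]; exact hk2)
    -- third vertex
    have hw3 : (S \ {u, v}).Nonempty := by
      rw [← Finset.card_pos, Finset.card_sdiff_of_subset hSsub, hScard, Finset.card_pair huv]
      omega
    obtain ⟨w, hwmem⟩ := hw3
    rw [Finset.mem_sdiff] at hwmem
    have hwS : w ∈ S := hwmem.1
    have hwu : w ≠ u := by
      intro hc; exact hwmem.2 (by simp [hc])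
    have hwv : w ≠ v := by
      intro hc; exact hwmem.2 (by simp [hc])
    have huS : u ∈ (↑S : Set (TorusV A B)) := Finset.mem_coe.mpr (hSsub (by simp))
    have hvS : v ∈ (↑S : Set (TorusV A B)) := Finset.mem_coe.mpr (hSsub (by simp))
    have hnot4 : ¬ HasEDSteinerTrees G ↑S 4 :=
      not_four_steiner huS hvS (Finset.mem_coe.mpr hwS) huv hwu.symm.symm.symm hwv.symm
        (N7 A B) N7_card (fun x hx => N7_mem_u hx) (fun y hy => N7_mem_v hy)
    have hsup : steinerLambda G ↑S ≤ 3 := by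
      rw [steinerLambda]
      have h0 : (0:ℕ) ∈ {n | HasEDSteinerTrees G (↑S : Set (TorusV A B)) n} := hasED_zero
      apply csSup_le ⟨0, h0⟩
      intro t ht
      by_contra hgt
      push_neg at hgt
      exact hnot4 (hasED_mono (by omega) ht)
    exact le_trans (Nat.sInf_le ⟨S, hScard, rfl⟩) hsup

end Final

/-- for m ≥ n ≥ 3 and 3 ≤ k < ⌈(2mn+3)/3⌉, 2 ≤ λ_k(C_m □ C_n) ≤ 3. -/
theorem stmt13 (m n k : ℕ) (hn : 3 ≤ n) (hmn : n ≤ m)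
    (hk3 : 3 ≤ k) (hk : k < (2 * m * n + 5) / 3) :
    2 ≤ genLambda (cycleGraph m □ cycleGraph n) k ∧
      genLambda (cycleGraph m □ cycleGraph n) k ≤ 3 :=
  stmt13' m n k hn hmn hk3 hk
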